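/- Let K be a field complete with respect to a discrete valuation with residue field k of characteristic p, let ℓ ≥ 2 with p ∤ ℓ, c ∈ K^× and a ∈ K both with nonnegative valuation, and let f(z) = z^ℓ - c. If the residue class of a is not in the forward orbit of the residue class of 0 under the reduction of f mod the maximal ideal, then every iterated preimage of a is a unit, and the extension K(⋃ₙ f^{-n}(a))/K is unramified. -/

import Mathlib

open Polynomial IntermediateField Finset

namespace TameAux

lemma nsmul_coe_real (n : ℕ) (r : ℝ) :
    n • ((r : WithTop ℝ)) = (((n : ℝ) * r : ℝ) : WithTop ℝ) := by
  induction n with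
  | zero => simp
  | succ k ih =>
      rw [succ_nsmul, ih, ← WithTop.coe_add, WithTop.coe_eq_coe]
      push_cast
      ring

lemma nsmul_top_real {n : ℕ} (hn : n ≠ 0) : n • (⊤ : WithTop ℝ) = ⊤ := by
  induction n with
  | zero => exact absurd rfl hn
  | succ k ih =>
      rw [succ_nsmul]
      simp

lemma wtop_ne_zero : (⊤ : WithTop ℝ) ≠ 0 := by simp

variable {L : Type*} [Field L]

structure IsVal (v : L → WithTop ℝ) : Prop where
  zero' : v 0 = ⊤
  one' : v 1 = 0
  mul' : ∀ x y, v (x * y) = v x + v y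
  add' : ∀ x y, min (v x) (v y) ≤ v (x + y)

namespace IsVal

variable {v : L → WithTop ℝ} (hv : IsVal v)
include hv

lemma inv_add {z : L} (hz : z ≠ 0) : v z + v z⁻¹ = 0 := by
  rw [← hv.mul' z z⁻¹, mul_inv_cancel₀ hz, hv.one']

lemma ne_top {z : L} (hz : z ≠ 0) : v z ≠ ⊤ := by
  intro h
  have := hv.inv_add hz
  rw [h, top_add] at this
  exact wtop_ne_zero this

lemma top_iff {z : L} : v z = ⊤ ↔ z = 0 := by
  constructor
  · intro h; by_contra hz; exact hv.ne_top hz h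
  · rintro rfl; exact hv.zero'

lemma neg_one : v (-1) = 0 := by
  have h : v (-1) + v (-1) = 0 := by
    rw [← hv.mul']; norm_num; exact hv.one'
  rcases (eq_or_ne (v (-1)) ⊤) with h1 | h1
  · rw [h1, top_add] at h; exact absurd h wtop_ne_zero
  · lift (v (-1)) to ℝ using h1 with r hr
    rw [← WithTop.coe_add] at h
    have : r + r = 0 := by exact_mod_cast h
    have : r = 0 := by linarith
    simp [this]

lemma neg (z : L) : v (-z) = v z := by
  have : v (-z) = v (-1) + v z := by rw [← hv.mul']; ring_nf
  rw [this, hv.neg_one, zero_add]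

lemma sub (x y : L) : min (v x) (v y) ≤ v (x - y) := by
  rw [sub_eq_add_neg, ← hv.neg y]
  exact hv.add' x (-y)

lemma pow (z : L) (n : ℕ) : v (z ^ n) = n • v z := by
  induction n with
  | zero => simpa using hv.one'
  | succ k ih => rw [pow_succ, hv.mul', ih, succ_nsmul]

lemma prod {ι : Type*} (s : Finset ι) (g : ι → L) :
    v (∏ i ∈ s, g i) = ∑ i ∈ s, v (g i) := by
  classical
  induction s using Finset.induction with
  | empty => simpa using hv.one'
  | insert a s' hx ih =>
                    rw [Finset.prod_insert hx, Finset.sum_insert hx, hv.mul', ih]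

lemma sum_inf {ι : Type*} (s : Finset ι) (g : ι → L) :
    s.inf (fun i => v (g i)) ≤ v (∑ i ∈ s, g i) := by
  classical
  induction s using Finset.induction with
  | empty => simp [hv.zero']
  | insert a s' hx ih =>
      rw [Finset.sum_insert hx, Finset.inf_insert]
      exact le_trans (min_le_min le_rfl ih) (hv.add' _ _)

lemma natCast_nonneg (n : ℕ) : 0 ≤ v (n : L) := by
  induction n with
  | zero => simp [hv.zero']
  | succ k ih =>
      push_cast
      refine le_trans ?_ (hv.add' (k : L) 1)
      simp [hv.one', ih]

lemma pow_eq_zero {z : L} {n : ℕ} (hn : n ≠ 0) (h : v z = 0) : v (z ^ n) = 0 := by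
  rw [hv.pow, h]; simp

lemma eq_zero_of_pow {z : L} {n : ℕ} (hn : n ≠ 0) (h : v (z ^ n) = 0) : v z = 0 := by
  rw [hv.pow] at h
  rcases eq_or_ne (v z) ⊤ with h1 | h1
  · rw [h1] at h
    rw [nsmul_top_real hn] at h
    exact absurd h wtop_ne_zero
  · lift (v z) to ℝ using h1 with r hr
    rw [nsmul_coe_real] at h
    have : (n : ℝ) * r = 0 := by exact_mod_cast h
    have : r = 0 := by
      rcases mul_eq_zero.1 this with h2 | h2
      · exact absurd (by exact_mod_cast h2) hn
      · exact h2
    simp [this]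

lemma nonneg_of_pow {z : L} {n : ℕ} (hn : n ≠ 0) (h : 0 ≤ v (z ^ n)) : 0 ≤ v z := by
  rw [hv.pow] at h
  rcases eq_or_ne (v z) ⊤ with h1 | h1
  · simp [h1]
  · lift (v z) to ℝ using h1 with r hr
    rw [nsmul_coe_real] at h
    have h2 : (0:ℝ) ≤ (n:ℝ) * r := by exact_mod_cast h
    have hn' : (0:ℝ) < n := by exact_mod_cast Nat.pos_of_ne_zero hn
    exact_mod_cast nonneg_of_mul_nonneg_right h2 hn'

end IsVal


lemma minfact {v : L → WithTop ℝ} (hv : IsVal v) {q : ℕ} (hq0 : 0 < q)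
    (hqv : v ((q : ℕ) : L) = 0) {ζ θ : L} (hζ : IsPrimitiveRoot ζ q) (hθ : v θ = 0)
    (t : ℕ → L) :
    (Finset.range q).inf (fun k => v (∑ i ∈ Finset.range q, t i * (ζ ^ k * θ) ^ i))
      = (Finset.range q).inf (fun i => v (t i)) := by
  have hζq : ζ ^ q = 1 := hζ.pow_eq_one
  have hvζ : v ζ = 0 := hv.eq_zero_of_pow hq0.ne' (by rw [hζq, hv.one'])
  have hζ0 : ζ ≠ 0 := by
    intro h; rw [h] at hvζ; rw [hv.zero'] at hvζ; simp at hvζ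
  have hvζi : v ζ⁻¹ = 0 := by
    have := hv.inv_add hζ0; rw [hvζ, zero_add] at this; exact this
  have h1 : ∀ k : ℕ, v (ζ ^ k * θ) = 0 := by
    intro k; rw [hv.mul', hv.pow, hvζ, hθ]; simp
  have hunit : ∀ k i : ℕ, v ((ζ ^ k * θ) ^ i) = 0 := by
    intro k i; rw [hv.pow, h1]; simp
  apply le_antisymm
  · -- LHS ≤ inf of coefficient valuations
    apply Finset.le_inf
    intro i hi
    rw [Finset.mem_range] at hi
    -- Fourier inversion identity
    have key : ∑ k ∈ Finset.range q,
        ζ⁻¹ ^ (i * k) * (∑ j ∈ Finset.range q, t j * (ζ ^ k * θ) ^ j)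
        = (q : L) * (t i * θ ^ i) := by
      have step1 : ∀ k ∈ Finset.range q,
          ζ⁻¹ ^ (i * k) * (∑ j ∈ Finset.range q, t j * (ζ ^ k * θ) ^ j)
          = ∑ j ∈ Finset.range q, (t j * θ ^ j) * (ζ⁻¹ ^ i * ζ ^ j) ^ k := by
        intro k _
        rw [Finset.mul_sum]
        refine Finset.sum_congr rfl (fun j _ => ?_)
        rw [mul_pow (ζ⁻¹ ^ i) (ζ ^ j) k, mul_pow (ζ ^ k) θ j,
          ← pow_mul ζ⁻¹ i k, ← pow_mul ζ k j, ← pow_mul ζ j k, Nat.mul_comm k j]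
        ring
      rw [Finset.sum_congr rfl step1, Finset.sum_comm]
      have step2 : ∀ j ∈ Finset.range q,
          ∑ k ∈ Finset.range q, (t j * θ ^ j) * (ζ⁻¹ ^ i * ζ ^ j) ^ k
          = if j = i then (q : L) * (t i * θ ^ i) else 0 := by
        intro j hj
        rw [Finset.mem_range] at hj
        rw [← Finset.mul_sum]
        by_cases hji : j = i
        · subst hji
          have h2 : ζ⁻¹ ^ j * ζ ^ j = 1 := by
            rw [inv_pow]; exact inv_mul_cancel₀ (pow_ne_zero _ hζ0)
          rw [h2]
          simp [mul_comm]
        · have hw1 : ζ⁻¹ ^ i * ζ ^ j ≠ 1 := by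
            intro h
            apply hji
            have : ζ ^ j = ζ ^ i := by
              rw [inv_pow] at h
              exact ((inv_mul_eq_one₀ (pow_ne_zero _ hζ0)).1 h).symm
            exact hζ.pow_inj hj hi this
          have hinvq : (ζ⁻¹ : L) ^ q = 1 := by rw [inv_pow, hζq, inv_one]
          have hwq : (ζ⁻¹ ^ i * ζ ^ j) ^ q = 1 := by
            rw [mul_pow, ← pow_mul, ← pow_mul, Nat.mul_comm i q, Nat.mul_comm j q,
              pow_mul, pow_mul, hinvq, hζq]
            simp
          rw [geom_sum_eq hw1 q, hwq]
          simp [hji]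
      rw [Finset.sum_congr rfl step2]
      simp [Finset.mem_range.2 hi]
    -- valuation bookkeeping
    have hvti : v (t i) = v ((q : L) * (t i * θ ^ i)) := by
      rw [hv.mul', hv.mul', hqv, hv.pow, hθ]
      simp
    rw [hvti, ← key]
    refine le_trans ?_ (hv.sum_inf _ _)
    apply Finset.le_inf
    intro k hk
    have : v (ζ⁻¹ ^ (i * k) * (∑ j ∈ Finset.range q, t j * (ζ ^ k * θ) ^ j))
        = v (∑ j ∈ Finset.range q, t j * (ζ ^ k * θ) ^ j) := by
      rw [hv.mul', hv.pow, hvζi]; simp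
    rw [this]
    exact Finset.inf_le hk
  · -- coefficient inf ≤ LHS
    apply Finset.le_inf
    intro k hk
    refine le_trans ?_ (hv.sum_inf _ _)
    apply Finset.le_inf
    intro i hi
    have : v (t i * (ζ ^ k * θ) ^ i) = v (t i) := by
      rw [hv.mul', hunit, add_zero]
    rw [this]
    exact Finset.inf_le hi

lemma window_lemma {ι : Type*} [Fintype ι] [DecidableEq ι] (w : ι → WithTop ℝ)
    (G : Set (WithTop ℝ))
    (hGsub : ∀ a b : ℝ, ((a : WithTop ℝ) ∈ G) → ((b : WithTop ℝ) ∈ G) →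
      (((a - b : ℝ) : WithTop ℝ) ∈ G))
    (mulop : ι → ι → ι) (e : ι) (h_id : ∀ j, mulop e j = j)
    (hinj : ∀ k, Function.Injective (mulop k))
    (hwin : ∀ T : Finset ι,
      (Finset.univ.inf fun k => ∑ j ∈ T, w (mulop k j)) ∈ G ∪ {(⊤ : WithTop ℝ)}) :
    ∀ j, w j ≠ ⊤ → w j ∈ G := by
  classical
  set n := Fintype.card ι with hn
  set e' : Fin n ≃ ι := (Fintype.equivFin ι).symm with he'
  set π : Equiv.Perm (Fin n) := Tuple.sort (w ∘ e') with hπ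
  set W : Fin n → WithTop ℝ := (w ∘ e') ∘ π with hW
  have hWmono : Monotone W := Tuple.monotone_sort (w ∘ e')
  -- the filter sets
  set A : ℕ → Finset (Fin n) :=
    fun t => Finset.filter (fun i : Fin n => (i : ℕ) < t) Finset.univ with hA
  have hAsucc : ∀ (t : ℕ) (ht : t < n), A (t + 1) = insert ⟨t, ht⟩ (A t) := by
    intro t ht
    ext i
    simp only [hA, Finset.mem_filter, Finset.mem_univ, true_and, Finset.mem_insert]
    constructor
    · intro h
      rcases Nat.lt_succ_iff_lt_or_eq.1 h with h | h
      · exact Or.inr h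
      · exact Or.inl (Fin.ext h)
    · rintro (rfl | h)
      · simp
      · omega
  have hAcard : ∀ t : ℕ, t ≤ n → (A t).card = t := by
    intro t
    induction t with
    | zero => intro _; simp [hA]
    | succ s ih =>
        intro hs
        rw [hAsucc s (by omega), Finset.card_insert_of_notMem (by simp [hA]),
          ih (by omega)]
  set S : ℕ → WithTop ℝ := fun t => ∑ i ∈ A t, W i with hS
  have hSsucc : ∀ (t : ℕ) (ht : t < n), S (t + 1) = S t + W ⟨t, ht⟩ := by
    intro t ht
    rw [hS]
    simp only
    rw [hAsucc t ht, Finset.sum_insert (by simp [hA])]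
    exact add_comm _ _
  -- sub-lemma D : sums over arbitrary finsets dominate sorted prefix sums
  have hD : ∀ t : ℕ, t ≤ n → ∀ T' : Finset ι, T'.card = t → S t ≤ ∑ j ∈ T', w j := by
    intro t
    induction t with
    | zero =>
        intro _ T' hT'
        rw [Finset.card_eq_zero.1 hT']
        simp [hS, hA]
    | succ s ih =>
        intro hs T' hT'
        -- find an element j₀ of T' with W ⟨s⟩ ≤ w j₀
        have hsn : s < n := by omega
        have hexists : ∃ j₀ ∈ T', W ⟨s, hsn⟩ ≤ w j₀ := by
          by_contra hcon
          push_neg at hcon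
          -- all elements of T' map to indices < s
          have hmaps : ∀ j ∈ T', ((π.symm (e'.symm j) : Fin n) : ℕ) < s := by
            intro j hj
            have hWj : W (π.symm (e'.symm j)) = w j := by
              simp [hW]
            by_contra hge
            push_neg at hge
            have : W ⟨s, hsn⟩ ≤ W (π.symm (e'.symm j)) := hWmono (by
              simp [Fin.le_def]; omega)
            rw [hWj] at this
            exact absurd this (not_le.2 (hcon j hj))
          have hinj2 : Set.InjOn (fun j => ((π.symm (e'.symm j) : Fin n) : ℕ)) T' := by
            intro a _ b _ hab
            have : π.symm (e'.symm a) = π.symm (e'.symm b) := Fin.ext hab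
            have := π.symm.injective this
            exact e'.symm.injective this
          have hle : T'.card ≤ (Finset.range s).card := by
            apply Finset.card_le_card_of_injOn (fun j => ((π.symm (e'.symm j) : Fin n) : ℕ))
            · intro j hj
              rw [Finset.mem_coe, Finset.mem_range]
              exact hmaps j hj
            · exact hinj2
          rw [hT', Finset.card_range] at hle
          omega
        obtain ⟨j₀, hj₀T, hj₀⟩ := hexists
        have hcard : (T'.erase j₀).card = s := by
          rw [Finset.card_erase_of_mem hj₀T, hT']
          omega
        have hsum : ∑ j ∈ T', w j = ∑ j ∈ T'.erase j₀, w j + w j₀ := by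
          rw [add_comm, Finset.add_sum_erase _ _ hj₀T]
        rw [hsum, hSsucc s hsn]
        exact add_le_add (ih (by omega) _ hcard) hj₀
  -- prefix sums lie in G ∪ {⊤}
  have hSG : ∀ t : ℕ, t ≤ n → S t ∈ G ∪ {(⊤ : WithTop ℝ)} := by
    intro t ht
    set T : Finset ι := (A t).image (fun i => e' (π i)) with hT
    have hTinj : Set.InjOn (fun i => e' (π i)) (A t) := fun a _ b _ hab =>
      π.injective (e'.injective hab)
    have hTcard : T.card = t := by
      rw [hT, Finset.card_image_of_injOn hTinj, hAcard t ht]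
    have hTsum : ∀ k : ι, ∑ j ∈ T, w (mulop k j) = ∑ i ∈ A t, w (mulop k (e' (π i))) := by
      intro k
      rw [hT, Finset.sum_image hTinj]
    have key : (Finset.univ.inf fun k => ∑ j ∈ T, w (mulop k j)) = S t := by
      apply le_antisymm
      · refine le_trans (Finset.inf_le (Finset.mem_univ e)) ?_
        rw [hTsum]
        apply le_of_eq
        refine Finset.sum_congr rfl (fun i _ => ?_)
        rw [h_id]
        rfl
      · apply Finset.le_inf
        intro k _
        have himg : ∑ j ∈ T, w (mulop k j) = ∑ j' ∈ T.image (mulop k), w j' := by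
          rw [Finset.sum_image (fun a _ b _ hab => hinj k hab)]
        rw [himg]
        apply hD t ht
        rw [Finset.card_image_of_injective _ (hinj k), hTcard]
    rw [← key]
    exact hwin T
  -- conclude
  intro j hj
  set i : Fin n := π.symm (e'.symm j) with hi
  have hWi : W i = w j := by simp [hW, hi]
  have hSne : S (i : ℕ) ≠ ⊤ := by
    rw [hS]
    rw [WithTop.sum_ne_top]
    intro i' hi'
    simp only [hA, Finset.mem_filter] at hi'
    intro htop
    have : W i' ≤ W i := hWmono (by rw [Fin.le_def]; omega)
    rw [htop, hWi] at this
    exact hj (top_le_iff.1 this)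
  have hstep : S ((i : ℕ) + 1) = S (i : ℕ) + w j := by
    rw [hSsucc (i : ℕ) i.isLt, ← hWi]
  have hS1G : S (i : ℕ) ∈ G := by
    rcases hSG (i : ℕ) (le_of_lt i.isLt) with h | h
    · exact h
    · exact absurd h hSne
  have hS2ne : S ((i : ℕ) + 1) ≠ ⊤ := by
    rw [hstep]
    exact WithTop.add_ne_top.2 ⟨hSne, hj⟩
  have hS2G : S ((i : ℕ) + 1) ∈ G := by
    rcases hSG ((i : ℕ) + 1) i.isLt with h | h
    · exact h
    · exact absurd h hS2ne
  lift S (i : ℕ) to ℝ using hSne with sa hsa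
  lift S ((i : ℕ) + 1) to ℝ using hS2ne with sb hsb
  lift w j to ℝ using hj with r hr
  have : sb = sa + r := by
    rw [← WithTop.coe_add] at hstep
    exact_mod_cast hstep
  have hfin : r = sb - sa := by linarith
  rw [hfin]
  exact hGsub sb sa hS2G hS1G

section Dynamics
variable {v : L → WithTop ℝ} {ℓ : ℕ} {cL : L} {f : L → L}

lemma forward_nonneg (hv : IsVal v) (hℓ : 2 ≤ ℓ) (hvc : 0 ≤ v cL)
    (hf : f = fun z => z ^ ℓ - cL) :
    ∀ x : L, 0 ≤ v x → 0 ≤ v (f x) := by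
  intro x hx
  rw [hf]
  refine le_trans ?_ (hv.sub (x ^ ℓ) cL)
  rw [le_min_iff]
  refine ⟨?_, hvc⟩
  rw [hv.pow]
  exact nsmul_nonneg hx ℓ

lemma backward_nonneg (hv : IsVal v) (hℓ : 2 ≤ ℓ) (hvc : 0 ≤ v cL)
    (hf : f = fun z => z ^ ℓ - cL) :
    ∀ x : L, 0 ≤ v (f x) → 0 ≤ v x := by
  intro x hx
  have hxl : x ^ ℓ = f x + cL := by rw [hf]; ring
  apply hv.nonneg_of_pow (n := ℓ) (by omega)
  rw [hxl]
  refine le_trans ?_ (hv.add' (f x) cL)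
  rw [le_min_iff]
  exact ⟨hx, hvc⟩

lemma iter_backward_nonneg (hv : IsVal v) (hℓ : 2 ≤ ℓ) (hvc : 0 ≤ v cL)
    (hf : f = fun z => z ^ ℓ - cL) :
    ∀ (n : ℕ) (x : L), 0 ≤ v (f^[n] x) → 0 ≤ v x := by
  intro n
  induction n with
  | zero => intro x hx; simpa using hx
  | succ k ih =>
      intro x hx
      rw [Function.iterate_succ_apply] at hx
      exact backward_nonneg hv hℓ hvc hf x (ih (f x) hx)

lemma contraction (hv : IsVal v) (hℓ : 2 ≤ ℓ) (hvc : 0 ≤ v cL)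
    (hf : f = fun z => z ^ ℓ - cL) :
    ∀ x y : L, 0 ≤ v x → 0 ≤ v y → v (x - y) ≤ v (f x - f y) := by
  intro x y hx hy
  have hfd : f x - f y = (∑ i ∈ Finset.range ℓ, x ^ i * y ^ (ℓ - 1 - i)) * (x - y) := by
    rw [hf, geom_sum₂_mul]
    ring
  rw [hfd, hv.mul']
  have hsum : 0 ≤ v (∑ i ∈ Finset.range ℓ, x ^ i * y ^ (ℓ - 1 - i)) := by
    refine le_trans ?_ (hv.sum_inf _ _)
    apply Finset.le_inf
    intro i _
    rw [hv.mul', hv.pow, hv.pow]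
    have := nsmul_nonneg hx i
    have := nsmul_nonneg hy (ℓ - 1 - i)
    exact add_nonneg ‹_› ‹_›
  calc v (x - y) = 0 + v (x - y) := (zero_add _).symm
    _ ≤ _ := add_le_add_left hsum _

lemma iter_contraction (hv : IsVal v) (hℓ : 2 ≤ ℓ) (hvc : 0 ≤ v cL)
    (hf : f = fun z => z ^ ℓ - cL) :
    ∀ (n : ℕ) (x y : L), 0 ≤ v x → 0 ≤ v y → v (x - y) ≤ v (f^[n] x - f^[n] y) := by
  intro n
  induction n with
  | zero => intro x y _ _; simp
  | succ k ih =>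
      intro x y hx hy
      rw [Function.iterate_succ_apply, Function.iterate_succ_apply]
      exact le_trans (contraction hv hℓ hvc hf x y hx hy)
        (ih (f x) (f y) (forward_nonneg hv hℓ hvc hf x hx)
          (forward_nonneg hv hℓ hvc hf y hy))

lemma part1 (hv : IsVal v) (hℓ : 2 ≤ ℓ) (hvc : 0 ≤ v cL)
    (hf : f = fun z => z ^ ℓ - cL) (aL : L) (hva : 0 ≤ v aL)
    (horbit : ∀ n : ℕ, 1 ≤ n → ¬ (0 < v (f^[n] 0 - aL))) :
    ∀ n : ℕ, 1 ≤ n → ∀ z : L, f^[n] z = aL → v z = 0 := by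
  intro n hn z hz
  have hz0 : 0 ≤ v z := by
    apply iter_backward_nonneg hv hℓ hvc hf n z
    rw [hz]
    exact hva
  rcases lt_or_eq_of_le hz0 with hlt | heq
  · exfalso
    apply horbit n hn
    have h1 : v (z - 0) ≤ v (f^[n] z - f^[n] 0) :=
      iter_contraction hv hℓ hvc hf n z 0 hz0 (by rw [hv.zero']; exact le_top)
    rw [sub_zero, hz] at h1
    have h2 : 0 < v (aL - f^[n] 0) := lt_of_lt_of_le hlt h1
    have h3 : v (f^[n] 0 - aL) = v (aL - f^[n] 0) := by
      rw [← hv.neg (aL - f^[n] 0)]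
      ring_nf
    rw [h3]
    exact h2
  · exact heq.symm
end Dynamics


-- ### chunk 5 : GoodSet and the Kummer step
section Steps
variable {K : Type*} [Field K] [Algebra K L]

def GoodSet (K : Type*) {L : Type*} [Field K] [Field L] [Algebra K L]
    (v : L → WithTop ℝ) : Set (WithTop ℝ) :=
  {r | ∃ x : K, x ≠ 0 ∧ v (algebraMap K L x) = r}

def GoodF (v : L → WithTop ℝ) (M : IntermediateField K L) : Prop :=
  ∀ z ∈ M, z ≠ 0 → v z ∈ GoodSet K v

lemma goodSet_sub {v : L → WithTop ℝ} (hv : IsVal v) (a b : ℝ)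
    (ha : (a : WithTop ℝ) ∈ GoodSet K v) (hb : (b : WithTop ℝ) ∈ GoodSet K v) :
    ((a - b : ℝ) : WithTop ℝ) ∈ GoodSet K v := by
  obtain ⟨x, hx0, hx⟩ := ha
  obtain ⟨y, hy0, hy⟩ := hb
  refine ⟨x * y⁻¹, by simp [hx0, hy0], ?_⟩
  have hyL : algebraMap K L y ≠ 0 := by
    simpa using hy0
  have hinv : v ((algebraMap K L y)⁻¹) = ((-b : ℝ) : WithTop ℝ) := by
    have h1 := hv.inv_add hyL
    rw [hy] at h1
    rcases eq_or_ne (v ((algebraMap K L y)⁻¹)) ⊤ with h2 | h2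
    · rw [h2] at h1; simp at h1
    · lift v ((algebraMap K L y)⁻¹) to ℝ using h2 with s hs
      rw [← WithTop.coe_add] at h1
      have : b + s = 0 := by exact_mod_cast h1
      have : s = -b := by linarith
      rw [this]
  rw [map_mul, map_inv₀, hv.mul', hx, hinv, ← WithTop.coe_add]
  congr 1

lemma goodSet_zero {v : L → WithTop ℝ} (hv : IsVal v) : (0 : WithTop ℝ) ∈ GoodSet K v :=
  ⟨1, one_ne_zero, by rw [map_one, hv.one']⟩

lemma natDegree_modByMonic_lt' {F : Type*} [Field F] (p : Polynomial F) {q : ℕ}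
    (hq : 0 < q) (u : F) : (p %ₘ (X ^ q - C u)).natDegree < q := by
  have hm : Monic (X ^ q - C u) := monic_X_pow_sub_C u hq.ne'
  rcases eq_or_ne (p %ₘ (X ^ q - C u)) 0 with h | h
  · rw [h]; simpa using hq
  · rw [natDegree_lt_iff_degree_lt h]
    have := degree_modByMonic_lt p hm
    rwa [degree_X_pow_sub_C hq u] at this

lemma aeval_modByMonic_eq {F : Type*} [Field F] [Algebra F L] (p : Polynomial F) {q : ℕ}
    (hq : 0 < q) (u : F) {x : L} (hx : x ^ q = algebraMap F L u) :
    aeval x (p %ₘ (X ^ q - C u)) = aeval x p := by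
  have hm : Monic (X ^ q - C u) := monic_X_pow_sub_C u hq.ne'
  conv_rhs => rw [← modByMonic_add_div p (X ^ q - C u)]
  rw [map_add, map_mul]
  have : aeval x (X ^ q - C u) = 0 := by
    rw [map_sub, map_pow, aeval_X, aeval_C, hx, sub_self]
  rw [this, zero_mul, add_zero]

lemma kummer_step [IsAlgClosed L] {v : L → WithTop ℝ} (hv : IsVal v)
    (M : IntermediateField K L) (hM : GoodF v M)
    {q : ℕ} (hq : q.Prime) (hqv : v ((q : ℕ) : L) = 0)
    (hμ : ∀ ζ : L, ζ ^ q = 1 → ζ ∈ M)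
    {θ : L} (hθ : v θ = 0) (hu : θ ^ q ∈ M) :
    GoodF v ((IntermediateField.adjoin ↥M {θ}).restrictScalars K) := by
  classical
  intro z hzmem hz0
  have hq0 : 0 < q := hq.pos
  have hqL : ((q : ℕ) : L) ≠ 0 := by
    intro h
    rw [h, hv.zero'] at hqv
    simp at hqv
  haveI : NeZero ((q : ℕ) : L) := ⟨hqL⟩
  haveI : NeZero q := ⟨hq0.ne'⟩
  obtain ⟨ζ, hζ⟩ := HasEnoughRootsOfUnity.exists_primitiveRoot L q
  have hζq : ζ ^ q = 1 := hζ.pow_eq_one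
  have hζpow : ∀ a : ℕ, ζ ^ (a % q) = ζ ^ a := by
    intro a
    conv_rhs => rw [← Nat.div_add_mod a q]
    rw [pow_add, pow_mul, hζq, one_pow, one_mul]
  set u : ↥M := ⟨θ ^ q, hu⟩ with hudef
  have hθu : θ ^ q = algebraMap ↥M L u := rfl
  have hint : IsIntegral ↥M θ := by
    refine ⟨X ^ q - C u, monic_X_pow_sub_C u hq0.ne', ?_⟩
    rw [eval₂_sub, eval₂_pow, eval₂_X, eval₂_C, ← hθu, sub_self]
  -- express z as a polynomial of degree < q in θ
  have hz' : z ∈ IntermediateField.adjoin ↥M {θ} := hzmem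
  obtain ⟨p, hp⟩ : ∃ p : Polynomial ↥M, aeval θ p = z := by
    have h1 := IntermediateField.adjoin_simple_toSubalgebra_of_isAlgebraic (F := ↥M) (α := θ) hint.isAlgebraic
    have h2 : z ∈ (IntermediateField.adjoin ↥M {θ}).toSubalgebra := hz'
    rw [h1, Algebra.adjoin_singleton_eq_range_aeval] at h2
    obtain ⟨p, hp⟩ := h2
    exact ⟨p, hp⟩
  set R : Polynomial ↥M := p %ₘ (X ^ q - C u) with hRdef
  have hRz : aeval θ R = z := by rw [hRdef, aeval_modByMonic_eq p hq0 u hθu, hp]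
  -- the conjugate-valuation function
  set w : ZMod q → WithTop ℝ := fun j => v (aeval (ζ ^ j.val * θ) R) with hwdef
  -- evaluation points behave well
  have hpoint : ∀ (k j : ZMod q), ζ ^ j.val * (ζ ^ k.val * θ) = ζ ^ (k + j).val * θ := by
    intro k j
    rw [ZMod.val_add, hζpow, pow_add]
    ring
  -- the window hypothesis
  have hwin : ∀ T : Finset (ZMod q),
      (Finset.univ.inf fun k => ∑ j ∈ T, w (k + j)) ∈ GoodSet K v ∪ {(⊤ : WithTop ℝ)} := by
    intro T
    -- roots of unity lie in M
    have hζM : ∀ j : ZMod q, ζ ^ j.val ∈ M := by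
      intro j
      apply hμ
      rw [← pow_mul, mul_comm, pow_mul, hζq, one_pow]
    set HT : Polynomial ↥M := ∏ j ∈ T, R.comp (C ⟨ζ ^ j.val, hζM j⟩ * X) with hHT
    set RT : Polynomial ↥M := HT %ₘ (X ^ q - C u) with hRT
    have hRTdeg : RT.natDegree < q := natDegree_modByMonic_lt' HT hq0 u
    -- key evaluation identity
    have hevalsub : ∀ k : ZMod q, (ζ ^ k.val * θ) ^ q = algebraMap ↥M L u := by
      intro k
      rw [mul_pow, ← pow_mul, mul_comm (k.val) q, pow_mul, hζq, one_pow, one_mul, hθu]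
    have hkey : ∀ k : ZMod q,
        v (aeval (ζ ^ k.val * θ) RT) = ∑ j ∈ T, w (k + j) := by
      intro k
      rw [hRT, aeval_modByMonic_eq HT hq0 u (hevalsub k), hHT, map_prod, hv.prod]
      refine Finset.sum_congr rfl fun j _ => ?_
      rw [aeval_comp, map_mul, aeval_C, aeval_X]
      have : algebraMap ↥M L ⟨ζ ^ j.val, hζM j⟩ = ζ ^ j.val := rfl
      rw [this, hpoint k j]
    -- apply the Fourier min fact
    have hmf := minfact hv hq0 hqv hζ hθ (fun i => algebraMap ↥M L (RT.coeff i))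
    have haeval : ∀ k : ℕ, aeval (ζ ^ k * θ) RT
        = ∑ i ∈ Finset.range q, algebraMap ↥M L (RT.coeff i) * (ζ ^ k * θ) ^ i := by
      intro k
      rw [aeval_eq_sum_range' (lt_of_lt_of_le hRTdeg le_rfl)]
      exact Finset.sum_congr rfl fun i _ => by rw [Algebra.smul_def]
    -- the inf over ZMod q equals the inf over range q
    have hinfeq : (Finset.univ.inf fun k : ZMod q => ∑ j ∈ T, w (k + j))
        = (Finset.range q).inf
            (fun k => v (∑ i ∈ Finset.range q, algebraMap ↥M L (RT.coeff i) * (ζ ^ k * θ) ^ i)) := by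
      apply le_antisymm
      · apply Finset.le_inf
        intro k hk
        rw [Finset.mem_range] at hk
        have h1 : (Finset.univ.inf fun k : ZMod q => ∑ j ∈ T, w (k + j))
            ≤ ∑ j ∈ T, w ((k : ZMod q) + j) := Finset.inf_le (Finset.mem_univ _)
        rw [← hkey (k : ZMod q)] at h1
        rwa [← haeval, ZMod.val_cast_of_lt hk] at *
      · apply Finset.le_inf
        intro k _
        have h1 := Finset.inf_le (f := fun k =>
          v (∑ i ∈ Finset.range q, algebraMap ↥M L (RT.coeff i) * (ζ ^ k * θ) ^ i))
          (Finset.mem_range.2 (ZMod.val_lt k))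
        rw [← hkey k, haeval k.val]
        exact h1
    rw [hinfeq, hmf]
    -- the inf of coefficient valuations is one of them
    have hne : (Finset.range q).Nonempty := ⟨0, Finset.mem_range.2 hq0⟩
    obtain ⟨i, hi, hieq⟩ := Finset.exists_mem_eq_inf (Finset.range q) hne
      (fun i => v (algebraMap ↥M L (RT.coeff i)))
    rw [hieq]
    rcases eq_or_ne (RT.coeff i) 0 with h | h
    · right
      rw [h, map_zero, hv.zero']
      rfl
    · left
      refine hM (algebraMap ↥M L (RT.coeff i)) ?_ ?_
      · exact (RT.coeff i).2
      · simpa using h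
  -- apply the window lemma
  have hfin := window_lemma w (GoodSet K v) (goodSet_sub hv) (fun k j => k + j) 0
    (fun j => zero_add j) (fun k => add_right_injective k) hwin
  have hw0 : w 0 = v z := by
    rw [hwdef]
    simp only [ZMod.val_zero, pow_zero, one_mul]
    rw [hRz]
  have := hfin 0 (by rw [hw0]; exact hv.ne_top hz0)
  rwa [hw0] at this

-- chunk 6 : cyclotomic step
lemma cyclo_step [IsAlgClosed L] {v : L → WithTop ℝ} (hv : IsVal v)
    (M : IntermediateField K L) (hM : GoodF v M)
    {q : ℕ} (hq : q.Prime) (hqv : v ((q : ℕ) : L) = 0)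
    {ζ : L} (hζq : ζ ^ q = 1) :
    GoodF v ((IntermediateField.adjoin ↥M {ζ}).restrictScalars K) := by
  classical
  have hq0 : 0 < q := hq.pos
  by_cases hζM : ζ ∈ M
  · -- trivial case
    intro z hzmem hz0
    have : IntermediateField.adjoin ↥M {ζ} = ⊥ := by
      rw [IntermediateField.adjoin_simple_eq_bot_iff]
      exact ⟨⟨ζ, hζM⟩, rfl⟩
    rw [this] at hzmem
    have hz' : z ∈ (IntermediateField.restrictScalars K (⊥ : IntermediateField ↥M L)) := hzmem
    rw [IntermediateField.restrictScalars_bot_eq_self] at hz'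
    exact hM z hz' hz0
  intro z hzmem hz0
  have hζ1 : ζ ≠ 1 := fun h => hζM (h ▸ M.one_mem)
  have horder : orderOf ζ = q := by
    have hdvd : orderOf ζ ∣ q := orderOf_dvd_of_pow_eq_one hζq
    rcases (Nat.Prime.eq_one_or_self_of_dvd hq _ hdvd) with h | h
    · exfalso; exact hζ1 (orderOf_eq_one_iff.1 h)
    · exact h
  have hζ : IsPrimitiveRoot ζ q := by
    rw [← horder]
    exact IsPrimitiveRoot.orderOf ζ
  have hq1 : 1 < q := hq.one_lt
  haveI : NeZero q := ⟨hq0.ne'⟩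
  haveI : Fact q.Prime := ⟨hq⟩
  have hζpow : ∀ a : ℕ, ζ ^ (a % q) = ζ ^ a := by
    intro a
    conv_rhs => rw [← Nat.div_add_mod a q]
    rw [pow_add, pow_mul, hζq, one_pow, one_mul]
  have hζpow1 : ∀ a : ℕ, ζ ^ a = 1 ↔ q ∣ a := fun a => hζ.pow_eq_one_iff_dvd a
  set u : ↥M := (1 : ↥M) with hudef
  have hθu : ζ ^ q = algebraMap ↥M L u := by rw [hζq]; simp [hudef]
  have hint : IsIntegral ↥M ζ := by
    refine ⟨X ^ q - C u, monic_X_pow_sub_C u hq0.ne', ?_⟩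
    rw [eval₂_sub, eval₂_pow, eval₂_X, eval₂_C, ← hθu, sub_self]
  obtain ⟨p, hp⟩ : ∃ p : Polynomial ↥M, aeval ζ p = z := by
    have h1 := IntermediateField.adjoin_simple_toSubalgebra_of_isAlgebraic (F := ↥M) (α := ζ) hint.isAlgebraic
    have h2 : z ∈ (IntermediateField.adjoin ↥M {ζ}).toSubalgebra := hzmem
    rw [h1, Algebra.adjoin_singleton_eq_range_aeval] at h2
    obtain ⟨p, hp⟩ := h2
    exact ⟨p, hp⟩
  set R : Polynomial ↥M := p %ₘ (X ^ q - C u) with hRdef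
  have hRz : aeval ζ R = z := by rw [hRdef, aeval_modByMonic_eq p hq0 u hθu, hp]
  -- the function on units
  set w : (ZMod q)ˣ → WithTop ℝ := fun j => v (aeval (ζ ^ ((j : ZMod q)).val) R) with hwdef
  -- the auxiliary polynomial killing the point 1
  set BB : Polynomial ↥M := (∑ i ∈ Finset.range q, X ^ i) - C ((q : ℕ) : ↥M) with hBB
  have hBBeval : ∀ m : ℕ, aeval (ζ ^ m) BB
      = (∑ i ∈ Finset.range q, (ζ ^ m) ^ i) - ((q : ℕ) : L) := by
    intro m
    rw [hBB, map_sub, map_sum]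
    simp [aeval_X_pow]
  have hBB1 : aeval (1 : L) BB = 0 := by
    have := hBBeval 0
    rw [pow_zero] at this
    rw [this]
    simp
  have hBBunit : ∀ m : ℕ, ζ ^ m ≠ 1 → v (aeval (ζ ^ m) BB) = 0 := by
    intro m hm
    have hg : ∑ i ∈ Finset.range q, (ζ ^ m) ^ i = 0 := by
      rw [geom_sum_eq hm q, ← pow_mul, mul_comm m q, pow_mul, hζq, one_pow, sub_self,
        zero_div]
    rw [hBBeval m, hg, zero_sub, hv.neg]
    exact hqv
  -- key: the window hypothesis
  have hwin : ∀ T : Finset (ZMod q)ˣ,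
      (Finset.univ.inf fun k => ∑ j ∈ T, w (k * j)) ∈ GoodSet K v ∪ {(⊤ : WithTop ℝ)} := by
    intro T
    set GT : Polynomial ↥M := BB * ∏ j ∈ T, R.comp (X ^ ((j : ZMod q)).val) with hGT
    set RT : Polynomial ↥M := GT %ₘ (X ^ q - C u) with hRT
    have hRTdeg : RT.natDegree < q := natDegree_modByMonic_lt' GT hq0 u
    have hpowq : ∀ m : ℕ, (ζ ^ m) ^ q = algebraMap ↥M L u := by
      intro m
      rw [← pow_mul, mul_comm m q, pow_mul, hζq, one_pow, hudef]
      simp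
    have hkey : ∀ m : ℕ, aeval (ζ ^ m) RT
        = aeval (ζ ^ m) BB * ∏ j ∈ T, aeval (ζ ^ (m * ((j : ZMod q)).val)) R := by
      intro m
      rw [hRT, aeval_modByMonic_eq GT hq0 u (hpowq m), hGT, map_mul, map_prod]
      congr 1
      refine Finset.prod_congr rfl fun j _ => ?_
      rw [aeval_comp, aeval_X_pow, ← pow_mul]
    have hwkey : ∀ k : (ZMod q)ˣ,
        v (aeval (ζ ^ ((k : ZMod q)).val) RT) = ∑ j ∈ T, w (k * j) := by
      intro k
      have hknz : ζ ^ ((k : ZMod q)).val ≠ 1 := by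
        intro h1
        rw [hζpow1] at h1
        have hlt : ((k : ZMod q)).val < q := ZMod.val_lt _
        have hne : ((k : ZMod q)).val ≠ 0 := by
          intro h0
          have h2 : (k : ZMod q) = 0 := by
            rwa [ZMod.val_eq_zero] at h0
          exact (Units.ne_zero k) h2
        exact hne (Nat.eq_zero_of_dvd_of_lt h1 hlt)
      rw [hkey, hv.mul', hBBunit _ hknz, zero_add, hv.prod]
      refine Finset.sum_congr rfl fun j _ => ?_
      rw [hwdef]
      congr 2
      have h1 : ((k * j : (ZMod q)ˣ) : ZMod q) = (k : ZMod q) * (j : ZMod q) := rfl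
      rw [h1, ZMod.val_mul, hζpow]
    -- identify with the inf over range q via minfact
    have haeval : ∀ m : ℕ, aeval (ζ ^ m * 1) RT
        = ∑ i ∈ Finset.range q, algebraMap ↥M L (RT.coeff i) * (ζ ^ m * 1) ^ i := by
      intro m
      rw [aeval_eq_sum_range' (lt_of_lt_of_le hRTdeg le_rfl)]
      exact Finset.sum_congr rfl fun i _ => by rw [Algebra.smul_def]
    have hmf := minfact hv hq0 hqv hζ (hv.one') (fun i => algebraMap ↥M L (RT.coeff i))
    have hinfeq : (Finset.univ.inf fun k : (ZMod q)ˣ => ∑ j ∈ T, w (k * j))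
        = (Finset.range q).inf
            (fun m => v (∑ i ∈ Finset.range q, algebraMap ↥M L (RT.coeff i) * (ζ ^ m * 1) ^ i)) := by
      apply le_antisymm
      · apply Finset.le_inf
        intro m hm
        rw [Finset.mem_range] at hm
        rw [← haeval m, mul_one]
        by_cases hm0 : ζ ^ m = 1
        · rw [hm0]
          have : aeval (1 : L) RT = 0 := by
            have := hkey 0
            rw [pow_zero] at this
            rw [this, hBB1, zero_mul]
          rw [this, hv.zero']
          exact le_top
        · -- m ≠ 0 gives a unit
          have hmne : ¬ q ∣ m := fun h => hm0 ((hζpow1 m).2 h)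
          have hcop : Nat.Coprime m q := by
            rw [Nat.coprime_comm]
            exact (Nat.Prime.coprime_iff_not_dvd hq).2 hmne
          set k : (ZMod q)ˣ := ZMod.unitOfCoprime m hcop with hk
          have hkval : ((k : ZMod q)).val = m := by
            rw [hk, ZMod.coe_unitOfCoprime, ZMod.val_cast_of_lt hm]
          refine le_trans (Finset.inf_le (Finset.mem_univ k)) ?_
          rw [← hwkey k, hkval]
      · apply Finset.le_inf
        intro k _
        have h1 := Finset.inf_le (f := fun m =>
          v (∑ i ∈ Finset.range q, algebraMap ↥M L (RT.coeff i) * (ζ ^ m * 1) ^ i))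
          (Finset.mem_range.2 (ZMod.val_lt ((k : ZMod q))))
        beta_reduce at h1
        rw [← haeval _, mul_one] at h1
        rw [← hwkey k]
        exact h1
    rw [hinfeq, hmf]
    have hne : (Finset.range q).Nonempty := ⟨0, Finset.mem_range.2 hq0⟩
    obtain ⟨i, hi, hieq⟩ := Finset.exists_mem_eq_inf (Finset.range q) hne
      (fun i => v (algebraMap ↥M L (RT.coeff i)))
    rw [hieq]
    rcases eq_or_ne (RT.coeff i) 0 with h | h
    · right
      rw [h, map_zero, hv.zero']
      rfl
    · left
      refine hM (algebraMap ↥M L (RT.coeff i)) (RT.coeff i).2 (by simpa using h)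
  have hfin := window_lemma w (GoodSet K v) (goodSet_sub hv) (fun k j => k * j) 1
    (fun j => one_mul j) (fun k => fun a b hab => by
      exact mul_left_cancel hab) hwin
  have hw1 : w 1 = v z := by
    rw [hwdef]
    simp only [Units.val_one, ZMod.val_one]
    rw [pow_one, hRz]
  have := hfin 1 (by rw [hw1]; exact hv.ne_top hz0)
  rwa [hw1] at this

-- chunk 7 : assembly
lemma le_adjoin_restrict (M : IntermediateField K L) (S : Set L) :
    M ≤ (IntermediateField.adjoin ↥M S).restrictScalars K := by
  intro x hx
  have : algebraMap (↥M) L ⟨x, hx⟩ ∈ IntermediateField.adjoin ↥M S :=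
    IntermediateField.algebraMap_mem _ _
  exact this

lemma mem_adjoin_restrict (M : IntermediateField K L) (θ : L) :
    θ ∈ (IntermediateField.adjoin ↥M {θ}).restrictScalars K :=
  IntermediateField.mem_adjoin_simple_self ↥M θ

lemma goodF_bot {v : L → WithTop ℝ} : GoodF v (⊥ : IntermediateField K L) := by
  intro z hz hz0
  rw [IntermediateField.mem_bot] at hz
  obtain ⟨x, rfl⟩ := hz
  exact ⟨x, by rintro rfl; simp at hz0, rfl⟩

-- valuation of a divisor of a tame number is zero
lemma tame_dvd {v : L → WithTop ℝ} (hv : IsVal v) {ℓ q : ℕ} (hq : q ∣ ℓ)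
    (htame : v ((ℓ : ℕ) : L) = 0) : v ((q : ℕ) : L) = 0 := by
  obtain ⟨m, rfl⟩ := hq
  have h1 : ((q * m : ℕ) : L) = ((q : ℕ) : L) * ((m : ℕ) : L) := by push_cast; ring
  rw [h1, hv.mul'] at htame
  have h2 := hv.natCast_nonneg (L := L) q
  have h3 := hv.natCast_nonneg (L := L) m
  have h4 : v ((q : ℕ) : L) ≤ v ((q : ℕ) : L) + v ((m : ℕ) : L) := le_add_of_nonneg_right h3
  rw [htame] at h4
  exact le_antisymm h4 h2

variable [IsAlgClosed L]

/-- adjoining all q-th roots of unity -/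
lemma rootsOfUnity_step {v : L → WithTop ℝ} (hv : IsVal v)
    (M : IntermediateField K L) (hM : GoodF v M)
    {q : ℕ} (hq : q.Prime) (hqv : v ((q : ℕ) : L) = 0) :
    ∃ M' : IntermediateField K L, M ≤ M' ∧ GoodF v M' ∧ ∀ z : L, z ^ q = 1 → z ∈ M' := by
  have hqL : ((q : ℕ) : L) ≠ 0 := by
    intro h; rw [h, hv.zero'] at hqv; simp at hqv
  haveI : NeZero ((q : ℕ) : L) := ⟨hqL⟩
  haveI : NeZero q := ⟨hq.pos.ne'⟩
  obtain ⟨ζ, hζ⟩ := HasEnoughRootsOfUnity.exists_primitiveRoot L q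
  refine ⟨(IntermediateField.adjoin ↥M {ζ}).restrictScalars K, le_adjoin_restrict M {ζ},
    cyclo_step hv M hM hq hqv hζ.pow_eq_one, ?_⟩
  intro z hz
  obtain ⟨i, _, rfl⟩ := hζ.eq_pow_of_pow_eq_one hz
  exact pow_mem (mem_adjoin_restrict M ζ) i

/-- a Good field containing all q-th roots of unity for every q in a finite set of
tame primes -/
lemma mu_field {v : L → WithTop ℝ} (hv : IsVal v) (s : Finset ℕ)
    (hs : ∀ q ∈ s, q.Prime ∧ v ((q : ℕ) : L) = 0) :
    ∃ M₀ : IntermediateField K L, GoodF v M₀ ∧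
      ∀ q ∈ s, ∀ z : L, z ^ q = 1 → z ∈ M₀ := by
  classical
  induction s using Finset.induction with
  | empty => exact ⟨⊥, goodF_bot, by simp⟩
  | @insert q s' hx ih =>
      obtain ⟨M₀, hM₀, hroots⟩ := ih (fun r hr => hs r (Finset.mem_insert_of_mem hr))
      obtain ⟨hqp, hqv⟩ := hs q (Finset.mem_insert_self q s')
      obtain ⟨M', hle, hM', hroots'⟩ := rootsOfUnity_step hv M₀ hM₀ hqp hqv
      refine ⟨M', hM', ?_⟩
      intro r hr z hz
      rcases Finset.mem_insert.1 hr with rfl | hr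
      · exact hroots' z hz
      · exact hle (hroots r hr z hz)

/-- property: contains all roots of unity of prime order dividing ℓ -/
def HasMu (ℓ : ℕ) (M : IntermediateField K L) : Prop :=
  ∀ q ∈ ℓ.primeFactors, ∀ z : L, z ^ q = 1 → z ∈ M

/-- adjoining a radical: tower over the prime factorisation -/
lemma radical_tower {v : L → WithTop ℝ} (hv : IsVal v) {ℓ : ℕ} (hℓ : 2 ≤ ℓ)
    (htame : v ((ℓ : ℕ) : L) = 0) :
    ∀ (rs : List ℕ), (∀ q ∈ rs, q ∈ ℓ.primeFactors) →
    ∀ (M : IntermediateField K L), GoodF v M → HasMu ℓ M →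
    ∀ (θ : L), v θ = 0 → θ ^ (rs.prod) ∈ M →
    ∃ M' : IntermediateField K L, M ≤ M' ∧ GoodF v M' ∧ HasMu ℓ M' ∧ θ ∈ M' := by
  intro rs
  induction rs with
  | nil =>
      intro _ M hM hMu θ hθ hpow
      rw [List.prod_nil, pow_one] at hpow
      exact ⟨M, le_rfl, hM, hMu, hpow⟩
  | cons q rs' ih =>
      intro hmem M hM hMu θ hθ hpow
      have hq : q ∈ ℓ.primeFactors := hmem q List.mem_cons_self
      have hqp : q.Prime := Nat.prime_of_mem_primeFactors hq
      have hqdvd : q ∣ ℓ := Nat.dvd_of_mem_primeFactors hq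
      have hqv : v ((q : ℕ) : L) = 0 := tame_dvd hv hqdvd htame
      -- first adjoin θ^q using the IH
      have hpow' : (θ ^ q) ^ (rs'.prod) ∈ M := by
        rw [← pow_mul, ← List.prod_cons]
        exact hpow
      obtain ⟨M', hle, hM', hMu', hθq⟩ := ih (fun r hr => hmem r (List.mem_cons_of_mem q hr))
        M hM hMu (θ ^ q) (hv.pow_eq_zero hqp.pos.ne' hθ) hpow'
      -- then adjoin θ via the Kummer step
      refine ⟨(IntermediateField.adjoin ↥M' {θ}).restrictScalars K,
        le_trans (le_trans hle (le_adjoin_restrict M' {θ})) le_rfl, ?_, ?_, mem_adjoin_restrict M' θ⟩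
      · exact kummer_step hv M' hM' hqp hqv (fun ζ hζ => hMu' q hq ζ hζ) hθ hθq
      · intro r hr z hz
        exact (le_adjoin_restrict M' {θ}) (hMu' r hr z hz)

-- chunk 8
lemma preimage_chain {v : L → WithTop ℝ} (hv : IsVal v) {ℓ : ℕ} (hℓ : 2 ≤ ℓ)
    (htame : v ((ℓ : ℕ) : L) = 0) (c a : K) (f : L → L)
    (hf : f = fun z => z ^ ℓ - algebraMap K L c)
    (hpart1 : ∀ n : ℕ, 1 ≤ n → ∀ z : L, f^[n] z = algebraMap K L a → v z = 0) :
    ∀ (n : ℕ) (w : L), f^[n] w = algebraMap K L a →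
    ∀ M : IntermediateField K L, GoodF v M → HasMu ℓ M →
    ∃ M' : IntermediateField K L, M ≤ M' ∧ GoodF v M' ∧ HasMu ℓ M' ∧ w ∈ M' := by
  intro n
  induction n with
  | zero =>
      intro w hw M hM hMu
      rw [Function.iterate_zero_apply] at hw
      exact ⟨M, le_rfl, hM, hMu, hw ▸ M.algebraMap_mem a⟩
  | succ k ih =>
      intro w hw M hM hMu
      rw [Function.iterate_succ_apply] at hw
      obtain ⟨M', hle, hM', hMu', hfw⟩ := ih (f w) hw M hM hMu
      have hvw : v w = 0 := by
        apply hpart1 (k + 1) (by omega) w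
        rw [Function.iterate_succ_apply]
        exact hw
      have hwpow : w ^ ℓ ∈ M' := by
        have : w ^ ℓ = f w + algebraMap K L c := by rw [hf]; ring
        rw [this]
        exact add_mem hfw (M'.algebraMap_mem c)
      have hℓ0 : ℓ ≠ 0 := by omega
      obtain ⟨M'', hle', hM'', hMu'', hwM⟩ := radical_tower hv hℓ htame
        ℓ.primeFactorsList
        (fun r hr => by
          rw [← Nat.toFinset_factors]
          exact List.mem_toFinset.2 hr)
        M' hM' hMu' w hvw
        (by rw [Nat.prod_primeFactorsList hℓ0]; exact hwpow)
      exact ⟨M'', le_trans hle hle', hM'', hMu'', hwM⟩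

theorem main_part2 {v : L → WithTop ℝ} (hv : IsVal v) {ℓ : ℕ} (hℓ : 2 ≤ ℓ)
    (htame : v ((ℓ : ℕ) : L) = 0) (c a : K) (f : L → L)
    (hf : f = fun z => z ^ ℓ - algebraMap K L c)
    (hpart1 : ∀ n : ℕ, 1 ≤ n → ∀ z : L, f^[n] z = algebraMap K L a → v z = 0) :
    ∀ z : L, z ∈ IntermediateField.adjoin K
        {w : L | ∃ n : ℕ, f^[n] w = algebraMap K L a} →
      z ≠ 0 → ∃ x : K, x ≠ 0 ∧ v (algebraMap K L x) = v z := by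
  classical
  set S : Set L := {w : L | ∃ n : ℕ, f^[n] w = algebraMap K L a} with hS
  intro z hz hz0
  -- reduce to a finite subset of S
  have hfin : ∃ t : Finset L, ↑t ⊆ S ∧ z ∈ IntermediateField.adjoin K (↑t : Set L) := by
    clear hz0
    induction hz using IntermediateField.adjoin_induction with
    | mem x hx =>
        exact ⟨{x}, by simpa using hx, IntermediateField.subset_adjoin _ _ (by simp)⟩
    | algebraMap x =>
        exact ⟨∅, by simp, IntermediateField.algebraMap_mem _ x⟩
    | add x y hx hy ihx ihy =>
        obtain ⟨tx, htx, hx'⟩ := ihx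
        obtain ⟨ty, hty, hy'⟩ := ihy
        refine ⟨tx ∪ ty, by simp [htx, hty, Set.union_subset_iff], ?_⟩
        exact add_mem
          (IntermediateField.adjoin.mono _ _ _ (by simp [Set.subset_union_left]) hx')
          (IntermediateField.adjoin.mono _ _ _ (by simp [Set.subset_union_right]) hy')
    | inv x hx ihx =>
        obtain ⟨tx, htx, hx'⟩ := ihx
        exact ⟨tx, htx, inv_mem hx'⟩
    | mul x y hx hy ihx ihy =>
        obtain ⟨tx, htx, hx'⟩ := ihx
        obtain ⟨ty, hty, hy'⟩ := ihy
        refine ⟨tx ∪ ty, by simp [htx, hty, Set.union_subset_iff], ?_⟩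
        exact mul_mem
          (IntermediateField.adjoin.mono _ _ _ (by simp [Set.subset_union_left]) hx')
          (IntermediateField.adjoin.mono _ _ _ (by simp [Set.subset_union_right]) hy')
  obtain ⟨t, htS, hzt⟩ := hfin
  -- a Good field containing any finite subset of S
  have hgood : ∀ t : Finset L, ↑t ⊆ S →
      ∃ M : IntermediateField K L, GoodF v M ∧ HasMu ℓ M ∧ (↑t : Set L) ⊆ (M : Set L) := by
    intro t
    induction t using Finset.induction with
    | empty =>
        intro _
        obtain ⟨M₀, hM₀, hroots⟩ := mu_field (K := K) hv ℓ.primeFactors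
          (fun q hq => ⟨Nat.prime_of_mem_primeFactors hq,
            tame_dvd hv (Nat.dvd_of_mem_primeFactors hq) htame⟩)
        exact ⟨M₀, hM₀, hroots, by simp⟩
    | @insert w t' hw ih =>
        intro hsub
        have ht'S : (↑t' : Set L) ⊆ S := by
          refine Set.Subset.trans ?_ hsub
          simp [Set.subset_insert]
        obtain ⟨M, hM, hMu, htM⟩ := ih ht'S
        have hwS : w ∈ S := hsub (by simp)
        obtain ⟨n, hn⟩ := hwS
        obtain ⟨M', hle, hM', hMu', hwM⟩ := preimage_chain hv hℓ htame c a f hf hpart1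
          n w hn M hM hMu
        refine ⟨M', hM', hMu', ?_⟩
        intro x hx
        rcases Finset.mem_coe.1 hx with hx'
        rcases Finset.mem_insert.1 hx' with rfl | hx''
        · exact hwM
        · exact hle (htM hx'')
  obtain ⟨M, hM, _, htM⟩ := hgood t htS
  have hzM : z ∈ M := (IntermediateField.adjoin_le_iff.2 htM) hzt
  exact hM z hzM hz0

end Steps
end TameAux

/-- Tame, nonnegative-valuation case.  Let `K` be a field (complete with respect to
a discrete valuation), `L` an algebraically closed extension carrying an additive
valuation `v : L → WithTop ℝ` (extending that of `K`), and `f z = z ^ ℓ - c` with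
`ℓ ≥ 2` tame (`v ℓ = 0`, i.e. the residue characteristic does not divide `ℓ`),
`v c ≥ 0`, `v a ≥ 0`.  If the residue class of `a` is not in the forward orbit of
the residue class of `0` (i.e. `v (f^n(0) - a) ≤ 0` for all `n ≥ 1`), then every
iterated preimage of `a` is a unit, and `K(⋃ₙ f^{-n}(a))/K` is unramified in the
sense that the value group does not grow. -/
theorem tame_unramified
    {K L : Type*} [Field K] [Field L] [Algebra K L] [IsAlgClosed L]
    (v : L → WithTop ℝ)
    (hv0 : v 0 = ⊤) (hv1 : v 1 = 0)
    (hmul : ∀ x y : L, v (x * y) = v x + v y)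
    (hadd : ∀ x y : L, min (v x) (v y) ≤ v (x + y))
    (ℓ : ℕ) (hℓ : 2 ≤ ℓ) (htame : v ((ℓ : L)) = 0)
    (c a : K) (hc : c ≠ 0)
    (hvc : 0 ≤ v (algebraMap K L c)) (hva : 0 ≤ v (algebraMap K L a))
    (f : L → L) (hf : f = fun z => z ^ ℓ - algebraMap K L c)
    (horbit : ∀ n : ℕ, 1 ≤ n → ¬ (0 < v (f^[n] 0 - algebraMap K L a))) :
    (∀ n : ℕ, 1 ≤ n → ∀ z : L, f^[n] z = algebraMap K L a → v z = 0) ∧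
    (∀ z : L, z ∈ IntermediateField.adjoin K
        {w : L | ∃ n : ℕ, f^[n] w = algebraMap K L a} →
      z ≠ 0 → ∃ x : K, x ≠ 0 ∧ v (algebraMap K L x) = v z) := by
  have hvI : TameAux.IsVal v := ⟨hv0, hv1, hmul, hadd⟩
  have hp1 := TameAux.part1 hvI hℓ hvc hf (algebraMap K L a) hva horbit
  exact ⟨hp1, TameAux.main_part2 hvI hℓ htame c a f hf hp1⟩
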